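/- If G is a connected graph on n vertices with n ≤ 2δ(G) + 1, then the edge-connectivity of G equals its minimum degree. -/

import Mathlib

open SimpleGraph

/-- The edge-connectivity of `G`: the minimum number of edges whose deletion disconnects `G`. -/
noncomputable def edgeConn {V : Type*} [Fintype V] (G : SimpleGraph V) : ℕ :=
  sInf {k | ∃ F : Finset (Sym2 V), ↑F ⊆ G.edgeSet ∧ F.card = k ∧ ¬ (G.deleteEdges ↑F).Connected}

/-- The minimum degree of `G`. -/
noncomputable def minDeg {V : Type*} [Fintype V] (G : SimpleGraph V) : ℕ :=
  sInf {d | ∃ v : V, d = (G.neighborSet v).ncard}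

open Finset


open scoped Classical in
lemma key_count {V : Type*} [Fintype V] (G : SimpleGraph V) (F : Finset (Sym2 V)) (δ : ℕ)
    (hδ : ∀ v, δ ≤ (G.neighborSet v).ncard)
    (hF : F.card + 1 ≤ δ)
    (A : Finset V) (hA : A.Nonempty)
    (hcross : ∀ a ∈ A, ∀ b ∉ A, G.Adj a b → s(a, b) ∈ F) :
    δ + 1 ≤ A.card := by
  set s := A.card with hs
  -- degree as a finset card
  have hdeg : ∀ u : V, (G.neighborSet u).ncard = (univ.filter (fun w => G.Adj u w)).card := by
    intro u
    rw [Set.ncard_eq_toFinset_card']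
    congr 1
    ext w
    rw [Set.mem_toFinset]
    simp [SimpleGraph.neighborSet]
  -- sum of degrees over A
  have hsum : s * δ ≤ ∑ u ∈ A, (univ.filter (fun w => G.Adj u w)).card := by
    calc s * δ = ∑ _u ∈ A, δ := by rw [Finset.sum_const, smul_eq_mul, mul_comm]
    _ ≤ _ := Finset.sum_le_sum (fun u _ => (hdeg u ▸ hδ u))
  -- split each degree
  have hsplit : ∀ u : V, (univ.filter (fun w => G.Adj u w)).card
      = (A.filter (fun w => G.Adj u w)).card + (Aᶜ.filter (fun w => G.Adj u w)).card := by
    intro u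
    rw [← Finset.card_union_of_disjoint]
    · congr 1
      rw [← Finset.filter_union, Finset.union_compl]
    · exact Finset.disjoint_filter_filter (disjoint_compl_right)
  -- inner bound
  have hinner : ∀ u ∈ A, (A.filter (fun w => G.Adj u w)).card ≤ s - 1 := by
    intro u hu
    have : A.filter (fun w => G.Adj u w) ⊆ A.erase u := by
      intro w hw
      simp only [Finset.mem_filter] at hw
      exact Finset.mem_erase.2 ⟨fun e => G.irrefl (e ▸ hw.2), hw.1⟩
    calc _ ≤ (A.erase u).card := Finset.card_le_card this
    _ = s - 1 := Finset.card_erase_of_mem hu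
  -- cross bound
  have hcrossb : ∑ u ∈ A, (Aᶜ.filter (fun w => G.Adj u w)).card ≤ F.card := by
    rw [← Finset.card_sigma]
    apply Finset.card_le_card_of_injOn (fun p => s(p.1, p.2))
    · rintro ⟨a, b⟩ hp
      simp only [Finset.mem_coe, Finset.mem_sigma, Finset.mem_filter, Finset.mem_compl] at hp
      exact hcross a hp.1 b hp.2.1 hp.2.2
    · rintro ⟨a, b⟩ hp ⟨c, d⟩ hq he
      simp only [Finset.mem_coe, Finset.mem_sigma, Finset.mem_filter, Finset.mem_compl] at hp hq
      rw [Sym2.eq_iff] at he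
      rcases he with ⟨h1, h2⟩ | ⟨h1, h2⟩
      · have h1' : a = c := h1
        have h2' : b = d := h2
        subst h1'; subst h2'; rfl
      · have h2' : b = c := h2
        exact absurd hq.1 (h2' ▸ hp.2.1)
  have h1 : s * δ ≤ s * (s - 1) + F.card := by
    calc s * δ ≤ ∑ u ∈ A, (univ.filter (fun w => G.Adj u w)).card := hsum
    _ = ∑ u ∈ A, ((A.filter (fun w => G.Adj u w)).card + (Aᶜ.filter (fun w => G.Adj u w)).card) := by
        exact Finset.sum_congr rfl (fun u _ => hsplit u)
    _ = ∑ u ∈ A, (A.filter (fun w => G.Adj u w)).card + ∑ u ∈ A, (Aᶜ.filter (fun w => G.Adj u w)).card :=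
        Finset.sum_add_distrib
    _ ≤ s * (s - 1) + F.card := by
        apply Nat.add_le_add
        · calc _ ≤ ∑ _u ∈ A, (s - 1) := Finset.sum_le_sum hinner
          _ = s * (s - 1) := by rw [Finset.sum_const, smul_eq_mul]
        · exact hcrossb
  have hs1 : 1 ≤ s := hA.card_pos
  -- arithmetic
  by_contra hc
  push_neg at hc
  have h2 : s ≤ δ := by omega
  obtain ⟨t, ht⟩ : ∃ t, s = t + 1 := ⟨s - 1, by omega⟩
  have h2' : t + 1 ≤ δ := ht ▸ h2
  have h3 : s * (s - 1) + δ ≤ s * δ := by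
    rw [ht]; simp only [Nat.add_sub_cancel]; nlinarith
  omega

open scoped Classical in
lemma cut_ge {V : Type*} [Fintype V] (G : SimpleGraph V)
    (hcard2 : 2 ≤ Fintype.card V) (h : Fintype.card V ≤ 2 * minDeg G + 1)
    (F : Finset (Sym2 V)) (hnc : ¬ (G.deleteEdges ↑F).Connected) :
    minDeg G ≤ F.card := by
  by_contra hlt
  push_neg at hlt
  have hF : F.card + 1 ≤ minDeg G := hlt
  have hne : Nonempty V := Fintype.card_pos_iff.mp (by omega)
  have hδ : ∀ v : V, minDeg G ≤ (G.neighborSet v).ncard :=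
    fun v => Nat.sInf_le ⟨v, rfl⟩
  -- get two non-reachable vertices
  have : ¬ (G.deleteEdges ↑F).Preconnected := fun hp => hnc ⟨hp⟩
  rw [SimpleGraph.Preconnected] at this
  push_neg at this
  obtain ⟨a, b, hab⟩ := this
  set G' := G.deleteEdges ↑F with hG'
  set S : Finset V := univ.filter (fun u => G'.Reachable a u) with hS
  have haS : a ∈ S := by
    simp only [hS, Finset.mem_filter, Finset.mem_univ, true_and]
    exact SimpleGraph.Reachable.refl a
  have hbS : b ∉ S := by simp [hS, hab]
  have hcrossS : ∀ x ∈ S, ∀ y ∉ S, G.Adj x y → s(x, y) ∈ F := by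
    intro x hx y hy hxy
    by_contra hFm
    have : G'.Adj x y := by
      rw [hG', SimpleGraph.deleteEdges_adj]
      exact ⟨hxy, hFm⟩
    simp only [hS, Finset.mem_filter, Finset.mem_univ, true_and] at hx hy
    exact hy (hx.trans this.reachable)
  have hcrossT : ∀ x ∈ Sᶜ, ∀ y ∉ Sᶜ, G.Adj x y → s(x, y) ∈ F := by
    intro x hx y hy hxy
    rw [Finset.mem_compl] at hx
    rw [Finset.mem_compl, not_not] at hy
    rw [Sym2.eq_swap]
    exact hcrossS y hy x hx hxy.symm
  have h1 := key_count G F (minDeg G) hδ hF S ⟨a, haS⟩ hcrossS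
  have h2 := key_count G F (minDeg G) hδ hF Sᶜ ⟨b, Finset.mem_compl.2 hbS⟩ hcrossT
  have := Finset.card_add_card_compl S
  omega

theorem chartrand_edgeConn_eq_minDeg {V : Type*} [Fintype V] (G : SimpleGraph V)
    (hG : G.Connected) (hcard : 2 ≤ Fintype.card V)
    (h : Fintype.card V ≤ 2 * minDeg G + 1) :
    edgeConn G = minDeg G := by
  classical
  have hne : Nonempty V := Fintype.card_pos_iff.mp (by omega)
  -- minDeg is attained
  obtain ⟨v0, hv0⟩ : ∃ v : V, minDeg G = (G.neighborSet v).ncard := by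
    have : minDeg G ∈ {d | ∃ v : V, d = (G.neighborSet v).ncard} :=
      Nat.sInf_mem ⟨_, ⟨Classical.arbitrary V, rfl⟩⟩
    exact this
  -- the incidence cut
  set F0 : Finset (Sym2 V) := (G.neighborSet v0).toFinset.image (fun w => s(v0, w)) with hF0
  have hF0sub : ↑F0 ⊆ G.edgeSet := by
    intro e he
    simp only [hF0, Finset.coe_image, Set.mem_image, Finset.mem_coe, Set.mem_toFinset] at he
    obtain ⟨w, hw, rfl⟩ := he
    exact hw
  have hF0card : F0.card = minDeg G := by
    rw [hF0, Finset.card_image_of_injOn, hv0, Set.ncard_eq_toFinset_card']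
    intro x _ y _ hxy
    rw [Sym2.eq_iff] at hxy
    rcases hxy with ⟨_, h2⟩ | ⟨h1, h2⟩
    · exact h2
    · rw [h2, h1]
  have hv0iso : ∀ u : V, ¬ (G.deleteEdges ↑F0).Adj v0 u := by
    intro u hu
    rw [SimpleGraph.deleteEdges_adj] at hu
    apply hu.2
    simp only [hF0, Finset.coe_image, Set.mem_image, Finset.mem_coe, Set.mem_toFinset]
    exact ⟨u, hu.1, rfl⟩
  have hF0nc : ¬ (G.deleteEdges ↑F0).Connected := by
    intro hc
    obtain ⟨w, hw⟩ := Fintype.exists_ne_of_one_lt_card (by omega) v0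
    obtain ⟨p⟩ := hc.preconnected v0 w
    cases p with
    | nil => exact hw rfl
    | cons hadj _ => exact hv0iso _ hadj
  apply le_antisymm
  · exact Nat.sInf_le ⟨F0, hF0sub, hF0card, hF0nc⟩
  · have hmem : edgeConn G ∈ {k | ∃ F : Finset (Sym2 V),
        ↑F ⊆ G.edgeSet ∧ F.card = k ∧ ¬ (G.deleteEdges ↑F).Connected} :=
      Nat.sInf_mem ⟨_, ⟨F0, hF0sub, hF0card, hF0nc⟩⟩
    obtain ⟨F, _, hFc, hFnc⟩ := hmem
    exact hFc ▸ cut_ge G hcard h F hFnc
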